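/- Let q be a prime power, r ≥ 1, and let Y, Y'' be two maximal isotropic subspaces of a nondegenerate hermitian space V of dimension 2r over F_{q²}. Suppose dim(Y''/(Y ∩ Y'')) = i with 1 ≤ i ≤ r. Then the number of maximal isotropic subspaces Y' of V with dim(Y'/(Y ∩ Y')) = i and dim(Y'/(Y' ∩ Y'')) = 1 equals (q^{2i}-1)(q-1)/(q²-1). -/

import Mathlib

set_option linter.unusedSectionVars false

open Module Submodule

section Counting

variable {K : Type} [Field K] [Fintype K]
variable {V : Type} [AddCommGroup V] [Module K V] [FiniteDimensional K V]

theorem card_mul_of_fibers {α β : Type*} [Finite α] [Finite β] (f : α → β) (k : ℕ)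
    (hfib : ∀ b : β, Nat.card {a : α // f a = b} = k) : Nat.card α = k * Nat.card β := by
  classical
  letI := Fintype.ofFinite α
  letI := Fintype.ofFinite β
  rw [Nat.card_eq_fintype_card, Nat.card_eq_fintype_card,
    Fintype.card_congr (Equiv.sigmaFiberEquiv f).symm, Fintype.card_sigma]
  have hf : ∀ b : β, Fintype.card {a : α // f a = b} = k := fun b => by
    rw [← Nat.card_eq_fintype_card]; exact hfib b
  simp [hf, Finset.sum_const, mul_comm]

theorem card_submodule (S : Submodule K V) :
    Nat.card ↥S = Nat.card K ^ finrank K ↥S := by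
  classical
  have hfin : Finite V := Module.finite_of_finite K
  letI := Fintype.ofFinite V
  letI : Fintype ↥S := Fintype.ofFinite ↥S
  rw [Nat.card_eq_fintype_card, Nat.card_eq_fintype_card]
  exact card_eq_pow_finrank

theorem card_compl_add {A C : Submodule K V} (hAC : A ≤ C) :
    Nat.card {x : V // x ∈ C ∧ x ∉ A} + Nat.card K ^ finrank K ↥A
      = Nat.card K ^ finrank K ↥C := by
  have hfin : Finite V := Module.finite_of_finite K
  have hsub : (A : Set V) ⊆ (C : Set V) := hAC
  have h1 : Nat.card {x : V // x ∈ C ∧ x ∉ A} = ((C : Set V) \ (A : Set V)).ncard := by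
    rw [← Nat.card_coe_set_eq]
    exact Nat.card_congr (Equiv.subtypeEquivRight fun x => by
      simp only [Set.mem_diff, SetLike.mem_coe])
  have h2 : ((C : Set V) \ (A : Set V)).ncard = (C : Set V).ncard - (A : Set V).ncard :=
    Set.ncard_diff hsub (Set.toFinite _)
  have h3 : (C : Set V).ncard = Nat.card K ^ finrank K ↥C := by
    rw [← Nat.card_coe_set_eq, ← card_submodule C]
    exact Nat.card_congr (Equiv.subtypeEquivRight fun x => Iff.rfl)
  have h4 : (A : Set V).ncard = Nat.card K ^ finrank K ↥A := by
    rw [← Nat.card_coe_set_eq, ← card_submodule A]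
    exact Nat.card_congr (Equiv.subtypeEquivRight fun x => Iff.rfl)
  have hle : (A : Set V).ncard ≤ (C : Set V).ncard :=
    Set.ncard_le_ncard hsub (Set.toFinite _)
  omega

theorem finrank_sup_span {A : Submodule K V} {x : V} (hx : x ∉ A) :
    finrank K ↥(A ⊔ (K ∙ x)) = finrank K ↥A + 1 := by
  have hx0 : x ≠ 0 := fun h => hx (h ▸ A.zero_mem)
  have h1 := Submodule.finrank_sup_add_finrank_inf_eq A (K ∙ x)
  have hsp : finrank K ↥(K ∙ x) = 1 := finrank_span_singleton hx0
  have hinf : A ⊓ (K ∙ x) = ⊥ := by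
    rw [Submodule.eq_bot_iff]
    rintro y ⟨hyA, hyS⟩
    obtain ⟨a, rfl⟩ := Submodule.mem_span_singleton.1 hyS
    rcases eq_or_ne a 0 with rfl | ha
    · rw [zero_smul]
    · exact absurd (by simpa [smul_smul, inv_mul_cancel₀ ha] using A.smul_mem a⁻¹ hyA) hx
  rw [hinf, hsp, finrank_bot] at h1
  omega

theorem card_cover {A B : Submodule K V} (hAB : A ≤ B) :
    Nat.card {C : Submodule K V // A ≤ C ∧ C ≤ B ∧ finrank K ↥C = finrank K ↥A + 1} *
      (Nat.card K ^ (finrank K ↥A + 1) - Nat.card K ^ finrank K ↥A)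
    = Nat.card K ^ finrank K ↥B - Nat.card K ^ finrank K ↥A := by
  classical
  have hfin : Finite V := Module.finite_of_finite K
  have hfinsub : Finite (Submodule K V) :=
    Finite.of_injective (fun (S : Submodule K V) => (S : Set V)) SetLike.coe_injective
  set Q := Nat.card K with hQ
  set a := finrank K ↥A with ha
  let f : {x : V // x ∈ B ∧ x ∉ A} →
      {C : Submodule K V // A ≤ C ∧ C ≤ B ∧ finrank K ↥C = a + 1} :=
    fun x => ⟨A ⊔ (K ∙ (x : V)), le_sup_left,
      sup_le hAB ((Submodule.span_singleton_le_iff_mem _ _).2 x.2.1),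
      finrank_sup_span x.2.2⟩
  have hfib : ∀ C, Nat.card {x : {x : V // x ∈ B ∧ x ∉ A} // f x = C} = Q ^ (a + 1) - Q ^ a := by
    rintro ⟨C, hACle, hCB, hC⟩
    have e : {x : {x : V // x ∈ B ∧ x ∉ A} // f x = ⟨C, hACle, hCB, hC⟩} ≃
        {x : V // x ∈ C ∧ x ∉ A} := by
      refine ⟨fun x => ⟨x.1.1, ?_, x.1.2.2⟩, fun y => ⟨⟨y.1, hCB y.2.1, y.2.2⟩, ?_⟩, ?_, ?_⟩
      · have hxe : A ⊔ (K ∙ (x.1 : V)) = C := congrArg Subtype.val x.2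
        have h5 : (x.1 : V) ∈ A ⊔ (K ∙ (x.1 : V)) :=
          Submodule.mem_sup_right (Submodule.mem_span_singleton_self _)
        rwa [hxe] at h5
      · apply Subtype.ext
        show A ⊔ (K ∙ (y.1 : V)) = C
        refine Submodule.eq_of_le_of_finrank_le
          (sup_le hACle ((Submodule.span_singleton_le_iff_mem _ _).2 y.2.1)) ?_
        rw [hC, finrank_sup_span y.2.2]
      · intro x; apply Subtype.ext; apply Subtype.ext; rfl
      · intro y; apply Subtype.ext; rfl
    rw [Nat.card_congr e]
    have h6 := card_compl_add (K := K) hACle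
    rw [← hQ, ← ha, hC] at h6
    omega
  have hmain := card_mul_of_fibers f (Q ^ (a + 1) - Q ^ a) hfib
  have hBA := card_compl_add (K := K) hAB
  rw [← hQ, ← ha] at hBA
  rw [hmain, mul_comm] at hBA
  omega

theorem card_setroots_le (p : Polynomial K) (hp : p ≠ 0) :
    Nat.card {x : K // Polynomial.eval x p = 0} ≤ p.natDegree := by
  classical
  have hsub : {x : K | Polynomial.eval x p = 0} ⊆ ↑p.roots.toFinset := by
    intro x hx
    simp only [Multiset.mem_toFinset, Finset.coe_sort_coe, Polynomial.mem_roots, hp,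
      ne_eq, not_false_iff, true_and, Finset.mem_coe]
    exact hx
  calc Nat.card {x : K // Polynomial.eval x p = 0}
      = ({x : K | Polynomial.eval x p = 0}).ncard := (Nat.card_coe_set_eq _)
  _ ≤ (↑p.roots.toFinset : Set K).ncard := Set.ncard_le_ncard hsub (Set.toFinite _)
  _ = p.roots.toFinset.card := by rw [Set.ncard_coe_finset]
  _ ≤ Multiset.card p.roots := p.roots.toFinset_card_le
  _ ≤ p.natDegree := p.card_roots'

end Counting

structure HermForm (q : ℕ) (K V : Type) [Field K] [Fintype K] [AddCommGroup V] [Module K V] :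
    Type where
  h : V → V → K
  hq : ∃ p n : ℕ, p.Prime ∧ 0 < n ∧ q = p ^ n
  hK : Fintype.card K = q ^ 2
  hadd : ∀ x y z : V, h (x + y) z = h x z + h y z
  hsmul : ∀ (a : K) (x y : V), h (a • x) y = a * h x y
  hherm : ∀ x y : V, h y x = h x y ^ q
  hnd : ∀ x : V, (∀ y : V, h x y = 0) → x = 0

namespace HermForm

variable {q : ℕ} {K : Type} [Field K] [Fintype K]
variable {V : Type} [AddCommGroup V] [Module K V] [FiniteDimensional K V]
variable (H : HermForm q K V)

include H

lemma two_le_q : 2 ≤ q := by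
  obtain ⟨p, n, hp, hn, rfl⟩ := H.hq
  calc 2 = 2 ^ 1 := (pow_one 2).symm
  _ ≤ 2 ^ n := Nat.pow_le_pow_right (by norm_num) hn
  _ ≤ p ^ n := Nat.pow_le_pow_left hp.two_le n

lemma pow_card (a : K) : a ^ (q ^ 2) = a := by
  rw [← H.hK]; exact FiniteField.pow_card a

lemma frob_frob (a : K) : (a ^ q) ^ q = a := by
  rw [← pow_mul, ← pow_two]; exact H.pow_card a

lemma frob_add (a b : K) : (a + b) ^ q = a ^ q + b ^ q := by
  obtain ⟨p, n, hp, hn, rfl⟩ := H.hq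
  haveI : Fact p.Prime := ⟨hp⟩
  haveI : CharP K p := by
    haveI : CharP K (ringChar K) := ringChar.charP K
    obtain ⟨m, hcp, hm⟩ := FiniteField.card K (ringChar K)
    rw [H.hK] at hm
    have hdvd : p ∣ (ringChar K) ^ (m : ℕ) := by
      rw [← hm]
      exact dvd_pow (dvd_pow_self p hn.ne') two_ne_zero
    have heq : p = ringChar K :=
      (Nat.prime_dvd_prime_iff_eq hp hcp).1 (Nat.Prime.dvd_of_dvd_pow hp hdvd)
    rw [heq]; exact ringChar.charP K
  exact add_pow_char_pow (R := K) (p := p) (n := n) a b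

lemma frob_zero : (0 : K) ^ q = 0 := zero_pow (by have := H.two_le_q; omega)

lemma haddr (x y z : V) : H.h x (y + z) = H.h x y + H.h x z := by
  have h1 := H.hherm (y + z) x
  rw [H.hadd, H.frob_add, H.hherm x y, H.hherm x z, H.frob_frob, H.frob_frob] at h1
  exact h1

lemma hsmulr (a : K) (x y : V) : H.h x (a • y) = a ^ q * H.h x y := by
  rw [H.hherm (a • y) x, H.hsmul, mul_pow, H.hherm x y, H.frob_frob]

lemma hzero_left (y : V) : H.h 0 y = 0 := by
  have := H.hsmul 0 0 y; rwa [zero_smul, zero_mul] at this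

lemma hzero_right (x : V) : H.h x 0 = 0 := by
  have := H.hsmulr 0 x 0; rwa [zero_smul, H.frob_zero, zero_mul] at this

lemma hrefl {x y : V} (hxy : H.h x y = 0) : H.h y x = 0 := by
  rw [H.hherm, hxy, H.frob_zero]

lemma hsum_right {ι : Type*} (s : Finset ι) (x : V) (f : ι → V) :
    H.h x (∑ j ∈ s, f j) = ∑ j ∈ s, H.h x (f j) := by
  classical
  induction s using Finset.induction with
  | empty => simp [H.hzero_right]
  | insert j s hj ih => rw [Finset.sum_insert hj, Finset.sum_insert hj, H.haddr, ih]

/-- Orthogonal complement with respect to the hermitian form. -/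
def perp (S : Submodule K V) : Submodule K V where
  carrier := {x | ∀ y ∈ S, H.h x y = 0}
  add_mem' := fun {x₁ x₂} hx hy y hyS => by
    rw [H.hadd, hx y hyS, hy y hyS, add_zero]
  zero_mem' := fun y _ => H.hzero_left y
  smul_mem' := fun a x hx y hyS => by rw [H.hsmul, hx y hyS, mul_zero]

lemma mem_perp {S : Submodule K V} {x : V} : x ∈ H.perp S ↔ ∀ y ∈ S, H.h x y = 0 := Iff.rfl

lemma perp_anti {S T : Submodule K V} (hST : S ≤ T) : H.perp T ≤ H.perp S :=
  fun _ hx y hyS => hx y (hST hyS)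

lemma le_perp_comm {S T : Submodule K V} (hST : S ≤ H.perp T) : T ≤ H.perp S :=
  fun t ht s hs => H.hrefl (hST hs t ht)

lemma finrank_add_finrank_perp (S : Submodule K V) :
    finrank K ↥(H.perp S) + finrank K ↥S = finrank K V := by
  classical
  set d := finrank K ↥S with hd
  let b : Basis (Fin d) K ↥S := finBasis K ↥S
  let Φ : V →ₗ[K] (Fin d → K) :=
    { toFun := fun x j => H.h x ((b j : ↥S) : V)
      map_add' := fun x y => by funext j; exact H.hadd x y _
      map_smul' := fun a x => by funext j; simpa using H.hsmul a x _ }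
  have hΦ : ∀ x j, Φ x j = H.h x ((b j : ↥S) : V) := fun _ _ => rfl
  have hker : LinearMap.ker Φ = H.perp S := by
    ext x
    simp only [LinearMap.mem_ker, mem_perp]
    constructor
    · intro hx y hyS
      have hy : y = ∑ j, b.repr ⟨y, hyS⟩ j • ((b j : ↥S) : V) := by
        have h1 : (⟨y, hyS⟩ : ↥S) = ∑ j, b.repr ⟨y, hyS⟩ j • b j := (b.sum_repr ⟨y, hyS⟩).symm
        have h2 := congrArg (Subtype.val) h1
        simp only [Submodule.coe_sum, Submodule.coe_smul] at h2
        exact h2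
      rw [hy, H.hsum_right]
      refine Finset.sum_eq_zero fun j _ => ?_
      rw [H.hsmulr]
      have : H.h x ((b j : ↥S) : V) = 0 := by rw [← hΦ, hx]; rfl
      rw [this, mul_zero]
    · intro hx
      funext j
      exact hx _ (b j).2
  have hrange : LinearMap.range Φ = ⊤ := by
    by_contra hne
    obtain ⟨φ, hφ0, hφ⟩ := Submodule.exists_dual_map_eq_bot_of_lt_top
      (lt_top_iff_ne_top.2 hne) inferInstance
    set c : Fin d → K := fun j => φ (fun k => if j = k then 1 else 0) with hc
    set u : ↥S := ∑ j, (c j ^ q) • b j with hu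
    have hval : ((u : ↥S) : V) = ∑ j, (c j ^ q) • ((b j : ↥S) : V) := by
      rw [hu]; simp
    have hcu : ∀ x : V, H.h x (u : V) = φ (Φ x) := by
      intro x
      rw [hval, H.hsum_right, LinearMap.pi_apply_eq_sum_univ φ (Φ x)]
      refine Finset.sum_congr rfl fun j _ => ?_
      rw [H.hsmulr, H.frob_frob, hΦ, smul_eq_mul, mul_comm]
    have hphiPhi : ∀ x, φ (Φ x) = 0 := by
      intro x
      have hmem : Φ x ∈ LinearMap.range Φ := ⟨x, rfl⟩
      have h2 : φ (Φ x) ∈ (LinearMap.range Φ).map φ := Submodule.mem_map_of_mem hmem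
      rw [hφ] at h2
      exact (Submodule.mem_bot _).1 h2
    have hu0 : u = 0 := by
      have : ((u : ↥S) : V) = 0 := by
        apply H.hnd
        intro y
        have h3 := hcu y
        rw [hphiPhi] at h3
        exact H.hrefl h3
      exact Subtype.ext this
    have hcz : ∀ j, c j = 0 := by
      intro j
      have h4 := congrArg (fun z => b.repr z j) hu0
      simp only [hu, map_sum, map_smul] at h4
      simp only [Finsupp.finset_sum_apply, Finsupp.smul_apply] at h4
      rw [Finset.sum_eq_single j ?h1 ?h2] at h4
      case h1 =>
        intro k _ hkj
        have hz : (b.repr (b k)) j = 0 := by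
          simp [Basis.repr_self, Finsupp.single_apply, hkj]
        rw [hz, smul_zero]
      case h2 => intro hj; exact absurd (Finset.mem_univ j) hj
      have h5 : c j ^ q = 0 := by simpa [Basis.repr_self] using h4
      exact pow_eq_zero_iff (n := q) (by have := H.two_le_q; omega) |>.1 h5
    apply hφ0
    apply LinearMap.ext
    intro v
    rw [LinearMap.pi_apply_eq_sum_univ φ v]
    simp only [LinearMap.zero_apply]
    refine Finset.sum_eq_zero fun j _ => ?_
    have : φ (fun k => if j = k then 1 else 0) = 0 := hcz j
    rw [this, smul_zero]
  have hrn := LinearMap.finrank_range_add_finrank_ker Φ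
  rw [hrange, hker] at hrn
  have hpi : finrank K (⊤ : Submodule K (Fin d → K)) = d := by
    rw [finrank_top]; simp
  rw [hpi] at hrn
  omega

lemma finrank_perp (S : Submodule K V) :
    finrank K ↥(H.perp S) = finrank K V - finrank K ↥S := by
  have := H.finrank_add_finrank_perp S; omega

lemma le_perp_perp (S : Submodule K V) : S ≤ H.perp (H.perp S) :=
  fun x hx y hy => H.hrefl (hy x hx)

lemma perp_perp (S : Submodule K V) : H.perp (H.perp S) = S := by
  have h1 := H.finrank_add_finrank_perp S
  have h2 := H.finrank_add_finrank_perp (H.perp S)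
  have h3 : finrank K ↥S ≤ finrank K V := Submodule.finrank_le S
  exact (Submodule.eq_of_le_of_finrank_le (H.le_perp_perp S) (by omega)).symm

lemma perp_sup (S T : Submodule K V) : H.perp (S ⊔ T) = H.perp S ⊓ H.perp T := by
  apply le_antisymm
  · exact le_inf (H.perp_anti le_sup_left) (H.perp_anti le_sup_right)
  · intro x hx
    rw [mem_perp]
    intro y hy
    obtain ⟨a, ha, b, hb, rfl⟩ := Submodule.mem_sup.1 hy
    rw [H.haddr, hx.1 a ha, hx.2 b hb, add_zero]

lemma perp_inf (S T : Submodule K V) : H.perp (S ⊓ T) = H.perp S ⊔ H.perp T := by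
  have h1 : H.perp (H.perp S ⊔ H.perp T) = S ⊓ T := by
    rw [H.perp_sup, H.perp_perp, H.perp_perp]
  calc H.perp (S ⊓ T) = H.perp (H.perp (H.perp S ⊔ H.perp T)) := by rw [h1]
    _ = H.perp S ⊔ H.perp T := H.perp_perp _

/-- An isotropic subspace of half the dimension is its own perp. -/
lemma lag_perp {L : Submodule K V} (hiso : ∀ x ∈ L, ∀ y ∈ L, H.h x y = 0)
    (hL2 : 2 * finrank K ↥L = finrank K V) : H.perp L = L := by
  have hle : L ≤ H.perp L := fun x hx y hy => hiso x hx y hy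
  have h1 := H.finrank_add_finrank_perp L
  exact (Submodule.eq_of_le_of_finrank_le hle (by omega)).symm

lemma sup_isotropic {A B : Submodule K V} (hA : A ≤ H.perp A) (hB : B ≤ H.perp B)
    (hAB : A ≤ H.perp B) : A ⊔ B ≤ H.perp (A ⊔ B) := by
  rw [H.perp_sup]
  exact sup_le (le_inf hA hAB) (le_inf (H.le_perp_comm hAB) hB)

lemma frob_neg (a : K) : (-a) ^ q = -(a ^ q) := by
  have h1 := H.frob_add a (-a)
  rw [add_neg_cancel, H.frob_zero] at h1
  exact (neg_eq_of_add_eq_zero_right h1.symm).symm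

lemma card_trace_zero : Nat.card {t : K // t + t ^ q = 0} = q := by
  classical
  have h2q := H.two_le_q
  set κ := Nat.card {t : K // t + t ^ q = 0} with hκ
  have hκq : κ ≤ q := by
    have hdeg : (Polynomial.X ^ q + Polynomial.X : Polynomial K).natDegree = q := by
      have hne : ¬ (1 = q) := by omega
      compute_degree!
      · simp [hne]
      · omega
    have hp0 : (Polynomial.X ^ q + Polynomial.X : Polynomial K) ≠ 0 := by
      intro hzz; rw [hzz] at hdeg; simp at hdeg; omega
    have hle := card_setroots_le (K := K) _ hp0
    rw [hdeg] at hle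
    refine le_trans (le_of_eq ?_) hle
    rw [hκ]
    exact Nat.card_congr (Equiv.subtypeEquivRight fun t => by
      simp only [Polynomial.eval_add, Polynomial.eval_pow, Polynomial.eval_X]
      constructor <;> intro hh <;> linear_combination hh)
  set T : K → K := fun t => t + t ^ q with hT
  have hTadd : ∀ a b : K, T (a + b) = T a + T b := fun a b => by
    simp only [hT, H.frob_add]; ring
  have hTsub : ∀ a b : K, T (a - b) = T a - T b := fun a b => by
    simp only [hT, sub_eq_add_neg, H.frob_add, H.frob_neg]; ring
  have hTfix : ∀ a : K, (T a) ^ q = T a := fun a => by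
    simp only [hT, H.frob_add, H.frob_frob]; ring
  let f : K → ↥(Set.range T) := fun t => ⟨T t, ⟨t, rfl⟩⟩
  have hfib : ∀ y : ↥(Set.range T), Nat.card {t : K // f t = y} = κ := by
    rintro ⟨y, t0, rfl⟩
    rw [hκ]
    apply Nat.card_congr
    refine ⟨fun t => ⟨t.1 - t0, ?_⟩, fun s => ⟨s.1 + t0, ?_⟩, ?_, ?_⟩
    · show T (t.1 - t0) = 0
      have ht : T t.1 = T t0 := Subtype.ext_iff.1 t.2
      rw [hTsub, ht, sub_self]
    · apply Subtype.ext
      show T (s.1 + t0) = T t0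
      have hs : T s.1 = 0 := s.2
      rw [hTadd, hs, zero_add]
    · intro t; apply Subtype.ext; simp
    · intro s; apply Subtype.ext; simp
  have hcard := card_mul_of_fibers f κ hfib
  have hK2 : Nat.card K = q * q := by
    rw [Nat.card_eq_fintype_card, H.hK, pow_two]
  have hRq : Nat.card ↥(Set.range T) ≤ q := by
    have hdeg : (Polynomial.X ^ q - Polynomial.X : Polynomial K).natDegree = q := by
      have hne : ¬ (1 = q) := by omega
      compute_degree!
      · simp [hne]
      · omega
    have hp0 : (Polynomial.X ^ q - Polynomial.X : Polynomial K) ≠ 0 := by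
      intro hzz; rw [hzz] at hdeg; simp at hdeg; omega
    have hle := card_setroots_le (K := K) _ hp0
    rw [hdeg] at hle
    refine le_trans ?_ hle
    have hsub : Set.range T ⊆ {x : K | Polynomial.eval x (Polynomial.X ^ q - Polynomial.X) = 0} := by
      rintro y ⟨t, rfl⟩
      simp only [Set.mem_setOf_eq, Polynomial.eval_sub, Polynomial.eval_pow, Polynomial.eval_X]
      rw [hTfix t, sub_self]
    calc Nat.card ↥(Set.range T) = (Set.range T).ncard := Nat.card_coe_set_eq _
    _ ≤ ({x : K | Polynomial.eval x (Polynomial.X ^ q - Polynomial.X) = 0}).ncard :=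
        Set.ncard_le_ncard hsub (Set.toFinite _)
    _ = Nat.card {x : K // Polynomial.eval x (Polynomial.X ^ q - Polynomial.X) = 0} :=
        (Nat.card_coe_set_eq _).symm
  have hqκ : q ≤ κ := by
    have h7 : q * q ≤ κ * q := by
      rw [← hK2, hcard]
      exact Nat.mul_le_mul_left κ hRq
    exact Nat.le_of_mul_le_mul_right h7 (by omega)
  omega

lemma card_pairs :
    Nat.card {p : K × K // p.1 * p.2 ^ q + p.2 * p.1 ^ q = 0 ∧ p.1 ≠ 0 ∧ p.2 ≠ 0}
      = (q ^ 2 - 1) * (q - 1) := by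
  classical
  have h2q := H.two_le_q
  have e : {p : K × K // p.1 * p.2 ^ q + p.2 * p.1 ^ q = 0 ∧ p.1 ≠ 0 ∧ p.2 ≠ 0} ≃
      {b : K // b ≠ 0} × {t : K // t + t ^ q = 0 ∧ t ≠ 0} := by
    refine ⟨fun p => ⟨⟨p.1.2, p.2.2.2⟩, ⟨p.1.1 * (p.1.2)⁻¹, ?_, ?_⟩⟩,
      fun bt => ⟨(bt.2.1 * bt.1.1, bt.1.1), ?_, ?_, bt.1.2⟩, ?_, ?_⟩
    · obtain ⟨⟨a, b⟩, hcond, ha, hb⟩ := p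
      have key : a * b⁻¹ + (a * b⁻¹) ^ q = (a * b ^ q + b * a ^ q) * (b * b ^ q)⁻¹ := by
        rw [mul_pow, inv_pow]
        field_simp
      rw [key, hcond, zero_mul]
    · exact mul_ne_zero p.2.2.1 (inv_ne_zero p.2.2.2)
    · obtain ⟨⟨b, hb⟩, ⟨t, ht, ht0⟩⟩ := bt
      show t * b * b ^ q + b * (t * b) ^ q = 0
      rw [mul_pow]
      calc t * b * b ^ q + b * (t ^ q * b ^ q) = (t + t ^ q) * (b * b ^ q) := by ring
      _ = 0 := by rw [ht, zero_mul]
    · exact mul_ne_zero bt.2.2.2 bt.1.2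
    · rintro ⟨⟨a, b⟩, hcond, ha, hb⟩
      apply Subtype.ext
      show (a * b⁻¹ * b, b) = (a, b)
      rw [Prod.mk.injEq]
      exact ⟨by field_simp, rfl⟩
    · rintro ⟨⟨b, hb⟩, ⟨t, ht, ht0⟩⟩
      rw [Prod.mk.injEq]
      constructor
      · apply Subtype.ext; rfl
      · apply Subtype.ext
        show t * b * b⁻¹ = t
        field_simp
  rw [Nat.card_congr e, Nat.card_prod]
  have h1 : Nat.card {b : K // b ≠ 0} = q ^ 2 - 1 := by
    rw [Nat.card_eq_fintype_card]
    have : Fintype.card {b : K // ¬(b = 0)} = Fintype.card K - Fintype.card {b : K // b = 0} :=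
      Fintype.card_subtype_compl _
    rw [Fintype.card_subtype_eq (0 : K)] at this
    rw [← H.hK]
    exact this
  have h2 : Nat.card {t : K // t + t ^ q = 0 ∧ t ≠ 0} = q - 1 := by
    have hA : ({t : K | t + t ^ q = 0}).ncard = q := by
      have htz := H.card_trace_zero
      rwa [show Nat.card {t : K // t + t ^ q = 0} = ({t : K | t + t ^ q = 0}).ncard by
        rw [← Nat.card_coe_set_eq]
        exact Nat.card_congr (Equiv.subtypeEquivRight fun t => Iff.rfl)] at htz
    have hmem : (0 : K) ∈ {t : K | t + t ^ q = 0} := by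
      simp [H.frob_zero]
    have hdiff : ({t : K | t + t ^ q = 0} \ {0}).ncard
        = ({t : K | t + t ^ q = 0}).ncard - 1 :=
      Set.ncard_diff_singleton_of_mem hmem
    rw [hA] at hdiff
    rw [← hdiff, ← Nat.card_coe_set_eq]
    apply Nat.card_congr
    exact Equiv.subtypeEquivRight fun t => by
      simp [Set.mem_diff]
  rw [h1, h2]

end HermForm

set_option maxHeartbeats 1000000

/-- The key counting step in the Hecke algebra computation: let `Y`, `Y''` be maximal
isotropic subspaces of a nondegenerate hermitian space `V` of dimension `2r` over `𝔽_{q²}`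
with `dim (Y''/(Y ∩ Y'')) = i` where `1 ≤ i ≤ r` (equivalently `dim (Y ∩ Y'') = r - i`).
Then the number of maximal isotropic subspaces `Y'` of `V` with `dim (Y'/(Y ∩ Y')) = i` and
`dim (Y'/(Y' ∩ Y'')) = 1` equals `(q^{2i}-1)(q-1)/(q²-1)`. -/
theorem stmt_13 (q r i : ℕ) (hq : ∃ p n : ℕ, p.Prime ∧ 0 < n ∧ q = p ^ n)
    (hr : 1 ≤ r) (hi1 : 1 ≤ i) (hir : i ≤ r)
    (K : Type) [Field K] [Fintype K] (hK : Fintype.card K = q ^ 2)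
    (V : Type) [AddCommGroup V] [Module K V] [FiniteDimensional K V]
    (hdim : Module.finrank K V = 2 * r)
    (h : V → V → K)
    (hadd : ∀ x y z : V, h (x + y) z = h x z + h y z)
    (hsmul : ∀ (a : K) (x y : V), h (a • x) y = a * h x y)
    (hherm : ∀ x y : V, h y x = h x y ^ q)
    (hnd : ∀ x : V, (∀ y : V, h x y = 0) → x = 0)
    (Y Y'' : Submodule K V)
    (hY : Module.finrank K ↥Y = r) (hYiso : ∀ x ∈ Y, ∀ y ∈ Y, h x y = 0)
    (hY'' : Module.finrank K ↥Y'' = r) (hY''iso : ∀ x ∈ Y'', ∀ y ∈ Y'', h x y = 0)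
    (hint : Module.finrank K ↥(Y ⊓ Y'') = r - i) :
    (Nat.card {Y' : Submodule K V | Module.finrank K ↥Y' = r ∧
        (∀ x ∈ Y', ∀ y ∈ Y', h x y = 0) ∧
        Module.finrank K ↥(Y ⊓ Y') = r - i ∧
        Module.finrank K ↥(Y' ⊓ Y'') = r - 1} : ℚ) =
      ((q : ℚ) ^ (2 * i) - 1) * ((q : ℚ) - 1) / ((q : ℚ) ^ 2 - 1) := by
  classical
  have hfinV : Finite V := Module.finite_of_finite K
  have hfinsub : Finite (Submodule K V) :=
    Finite.of_injective (fun (S : Submodule K V) => (S : Set V)) SetLike.coe_injective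
  set H : HermForm q K V := ⟨h, hq, hK, hadd, hsmul, hherm, hnd⟩ with hH
  have h2q : 2 ≤ q := H.two_le_q
  have hQcard : Nat.card K = q ^ 2 := by rw [Nat.card_eq_fintype_card, hK]
  set Sset : Set (Submodule K V) := {Y' : Submodule K V | Module.finrank K ↥Y' = r ∧
      (∀ x ∈ Y', ∀ y ∈ Y', h x y = 0) ∧
      Module.finrank K ↥(Y ⊓ Y') = r - i ∧
      Module.finrank K ↥(Y' ⊓ Y'') = r - 1} with hSset
  set W : Submodule K V := Y ⊓ Y'' with hW
  have hYlag : H.perp Y = Y := H.lag_perp hYiso (by rw [hY, hdim])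
  have hY''lag : H.perp Y'' = Y'' := H.lag_perp hY''iso (by rw [hY'', hdim])
  have hperpdim : ∀ A : Submodule K V, finrank K ↥(H.perp A) + finrank K ↥A = 2 * r :=
    fun A => by rw [← hdim]; exact H.finrank_add_finrank_perp A
  have hWY : W ≤ Y := inf_le_left
  have hWY'' : W ≤ Y'' := inf_le_right
  -- If two r-dimensional subspaces both contain an (r-1)-dimensional C and differ,
  -- their intersection is C.
  have hlag_inf : ∀ A B C : Submodule K V, finrank K ↥A = r → finrank K ↥B = r →
      C ≤ A → C ≤ B → finrank K ↥C = r - 1 → A ≠ B → A ⊓ B = C := by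
    intro A B C hA hB hCA hCB hC hAB
    have h1 : C ≤ A ⊓ B := le_inf hCA hCB
    have h2 : finrank K ↥(A ⊓ B) ≤ r := by
      rw [← hA]; exact Submodule.finrank_mono inf_le_left
    rcases Nat.lt_or_ge (finrank K ↥(A ⊓ B)) r with hlt | hge
    · exact (Submodule.eq_of_le_of_finrank_le h1 (by omega)).symm
    · exfalso
      have hABr : finrank K ↥(A ⊓ B) = r := le_antisymm h2 hge
      have hAeq : A ⊓ B = A :=
        Submodule.eq_of_le_of_finrank_le inf_le_left (by rw [hA, hABr])
      have hBeq : A ⊓ B = B :=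
        Submodule.eq_of_le_of_finrank_le inf_le_right (by rw [hB, hABr])
      exact hAB (hAeq.symm.trans hBeq)
  -- Step 1: every Y' in Sset satisfies Y ⊓ Y' = W (in particular W ≤ Y').
  have hstep1 : ∀ Y' : Submodule K V, Y' ∈ Sset → Y ⊓ Y' = W := by
    rintro Y' ⟨hr', hiso', hYi', hYY'⟩
    set X : Submodule K V := Y ⊓ Y' with hX
    have hd_le : finrank K ↥(X ⊓ Y'') ≤ r - i := by
      rw [← hYi']; exact Submodule.finrank_mono inf_le_left
    have hsup1 : X ⊔ (Y' ⊓ Y'') ≤ Y' := sup_le inf_le_right inf_le_left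
    have heq1 := Submodule.finrank_sup_add_finrank_inf_eq X (Y' ⊓ Y'')
    have hXinf : X ⊓ (Y' ⊓ Y'') = X ⊓ Y'' := by
      rw [hX]; ext x
      simp only [Submodule.mem_inf]; tauto
    rw [hXinf] at heq1
    have hle1 : finrank K ↥(X ⊔ (Y' ⊓ Y'')) ≤ r := by
      rw [← hr']; exact Submodule.finrank_mono hsup1
    rcases eq_or_ne (finrank K ↥(X ⊓ Y'')) (r - i) with hcase | hcase
    · have hXY'' : X ⊓ Y'' = X :=
        Submodule.eq_of_le_of_finrank_le inf_le_left (by rw [hYi', hcase])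
      have hXW : X ≤ W := le_inf inf_le_left (by rw [← hXY'']; exact inf_le_right)
      exact Submodule.eq_of_le_of_finrank_le hXW (by rw [hYi', hint])
    · exfalso
      have hd : finrank K ↥(X ⊓ Y'') + 1 = r - i := by rw [hYi', hYY'] at heq1; omega
      set T : Submodule K V := Y ⊔ (Y' ⊓ Y'') with hT
      have hTeq := Submodule.finrank_sup_add_finrank_inf_eq Y (Y' ⊓ Y'')
      have hYinf : Y ⊓ (Y' ⊓ Y'') = X ⊓ Y'' := by
        rw [hX]; ext x; simp only [Submodule.mem_inf]; tauto
      rw [hYinf] at hTeq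
      have hWperp : W ≤ H.perp T := by
        rw [hT, H.perp_sup]
        refine le_inf ?_ ?_
        · rw [hYlag]; exact hWY
        · intro x hx
          exact fun y hy => hY''iso x (hWY'' hx) y hy.2
      have hXperp : X ≤ H.perp T := by
        rw [hT, H.perp_sup]
        refine le_inf ?_ ?_
        · rw [hYlag]; exact inf_le_left
        · intro x hx
          exact fun y hy => hiso' x hx.2 y hy.1
      have hsup2 : W ⊔ X ≤ H.perp T := sup_le hWperp hXperp
      have hmono2 : finrank K ↥(W ⊔ X) ≤ finrank K ↥(H.perp T) :=
        Submodule.finrank_mono hsup2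
      have hfr2 := Submodule.finrank_sup_add_finrank_inf_eq W X
      have hWX : W ⊓ X = X ⊓ Y'' := by
        rw [hW, hX]; ext x; simp only [Submodule.mem_inf]; tauto
      rw [hWX] at hfr2
      rw [← hT] at hTeq
      have hTdim : finrank K ↥T = r + i := by
        rw [hY, hYY'] at hTeq; omega
      have hperpT : finrank K ↥(H.perp T) = r - i := by
        have h10 := hperpdim T
        rw [hTdim] at h10
        omega
      have hWXfr : finrank K ↥(W ⊔ X) = r - i + 1 := by
        rw [hint, hYi'] at hfr2; omega
      rw [hWXfr, hperpT] at hmono2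
      omega
  -- Per-hyperplane count.
  have hperH : ∀ Hp : Submodule K V, W ≤ Hp → Hp ≤ Y'' → finrank K ↥Hp = r - 1 →
      Nat.card {Y' : Submodule K V // Y' ∈ Sset ∧ Y' ⊓ Y'' = Hp} = q - 1 := by
    intro Hp hWH hHY hHr
    have hHle' : Hp ≤ H.perp Hp := fun x hx y hy => hY''iso x (hHY hx) y (hHY hy)
    have hHperp_dim : finrank K ↥(H.perp Hp) = r + 1 := by
      have := hperpdim Hp; omega
    have hY''perpH : Y'' ≤ H.perp Hp := by rw [← hY''lag]; exact H.perp_anti hHY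
    have hYHp : Y ⊓ Hp = W := by
      apply le_antisymm
      · exact le_inf inf_le_left (inf_le_right.trans hHY)
      · exact le_inf hWY hWH
    set M : Submodule K V := Y ⊓ H.perp Hp with hM
    have hMdim : finrank K ↥M = r - i + 1 := by
      have h1 := Submodule.finrank_sup_add_finrank_inf_eq Y Hp
      rw [hYHp] at h1
      have h2 : H.perp (Y ⊔ Hp) = M := by rw [H.perp_sup, hYlag]
      have h3 := hperpdim (Y ⊔ Hp)
      rw [h2] at h3
      rw [hY, hHr] at h1
      have h4 : finrank K ↥W = r - i := hint
      omega
    have hMY : M ≤ Y := inf_le_left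
    have hMiso : M ≤ H.perp M := fun x hx y hy => hYiso x (hMY hx) y (hMY hy)
    have hMperpH : M ≤ H.perp Hp := inf_le_right
    set L0 : Submodule K V := Hp ⊔ M with hL0
    have hWperpHp : W ≤ H.perp Hp := fun x hx y hy => hY''iso x (hWY'' hx) y (hHY hy)
    have hHpM : Hp ⊓ M = W := by
      apply le_antisymm
      · refine le_trans (inf_le_inf_left Hp hMY) ?_
        rw [inf_comm, hYHp]
      · exact le_inf hWH (le_inf hWY hWperpHp)
    have hL0dim : finrank K ↥L0 = r := by
      have h1 := Submodule.finrank_sup_add_finrank_inf_eq Hp M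
      rw [← hL0, hHpM, hHr, hMdim, hint] at h1
      omega
    have hL0iso : L0 ≤ H.perp L0 :=
      H.sup_isotropic hHle' hMiso (H.le_perp_comm hMperpH)
    have hL0iso' : ∀ x ∈ L0, ∀ y ∈ L0, H.h x y = 0 := fun x hx y hy => hL0iso hx y hy
    have hL0lag : H.perp L0 = L0 := H.lag_perp hL0iso' (by rw [hL0dim, hdim])
    have hYL0 : finrank K ↥(Y ⊓ L0) = r - i + 1 := by
      have hYL0eq : Y ⊓ L0 = M := by
        apply le_antisymm
        · exact le_inf inf_le_left (inf_le_right.trans (sup_le hHle' hMperpH))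
        · exact le_inf hMY le_sup_right
      rw [hYL0eq, hMdim]
    have hL0Y'' : L0 ≠ Y'' := by
      intro he
      rw [he] at hYL0
      rw [← hW] at hYL0
      rw [hint] at hYL0
      omega
    have hL0Y''inf : L0 ⊓ Y'' = Hp :=
      hlag_inf L0 Y'' Hp hL0dim hY'' le_sup_left hHY hHr hL0Y''
    obtain ⟨w, hwY'', hwH⟩ : ∃ w, w ∈ Y'' ∧ w ∉ Hp := by
      by_contra hc
      push_neg at hc
      have hcc : Y'' ≤ Hp := hc
      have := Submodule.finrank_mono hcc
      rw [hY'', hHr] at this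
      omega
    have hY''eq : Hp ⊔ (K ∙ w) = Y'' := by
      refine Submodule.eq_of_le_of_finrank_le
        (sup_le hHY ((Submodule.span_singleton_le_iff_mem _ _).2 hwY'')) ?_
      rw [hY'', finrank_sup_span hwH, hHr]
      omega
    obtain ⟨w0, hw0L0, hw0H⟩ : ∃ w0, w0 ∈ L0 ∧ w0 ∉ Hp := by
      by_contra hc
      push_neg at hc
      have hcc : L0 ≤ Hp := hc
      have := Submodule.finrank_mono hcc
      rw [hL0dim, hHr] at this
      omega
    have hw0perpHp : w0 ∈ H.perp Hp := by
      have : w0 ∈ H.perp L0 := by rw [hL0lag]; exact hw0L0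
      exact H.perp_anti le_sup_left this
    have hc0 : H.h w0 w ≠ 0 := by
      intro hc
      have hw0perp : w0 ∈ H.perp Y'' := by
        rw [← hY''eq, H.perp_sup]
        refine ⟨hw0perpHp, ?_⟩
        intro y hy
        obtain ⟨a, rfl⟩ := Submodule.mem_span_singleton.1 hy
        rw [H.hsmulr, hc, mul_zero]
      rw [hY''lag] at hw0perp
      exact hw0H (by rw [← hL0Y''inf]; exact Submodule.mem_inf.2 ⟨hw0L0, hw0perp⟩)
    set w' : V := (H.h w0 w)⁻¹ • w0 with hw'def
    have hw'L0 : w' ∈ L0 := L0.smul_mem _ hw0L0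
    have hw'H : w' ∉ Hp := by
      intro hc
      apply hw0H
      have := Hp.smul_mem (H.h w0 w) hc
      rwa [hw'def, smul_smul, mul_inv_cancel₀ hc0, one_smul] at this
    have hw'w : H.h w' w = 1 := by
      rw [hw'def, H.hsmul, inv_mul_cancel₀ hc0]
    have hww' : H.h w w' = 1 := by
      have := H.hherm w' w
      rw [hw'w, one_pow] at this
      exact this
    have hww : H.h w w = 0 := hY''iso w hwY'' w hwY''
    have hw'w' : H.h w' w' = 0 := hL0iso' w' hw'L0 w' hw'L0
    have hwperpH : w ∈ H.perp Hp := hY''perpH hwY''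
    have hw'perpH : w' ∈ H.perp Hp := by
      have : w' ∈ H.perp L0 := by rw [hL0lag]; exact hw'L0
      exact H.perp_anti le_sup_left this
    have hw'Y'' : w' ∉ Y'' := by
      intro hc
      exact hw'H (by rw [← hL0Y''inf]; exact Submodule.mem_inf.2 ⟨hw'L0, hc⟩)
    have hwL0 : w ∉ L0 := by
      intro hc
      exact hwH (by rw [← hL0Y''inf]; exact Submodule.mem_inf.2 ⟨hc, hwY''⟩)
    have hL0eq : Hp ⊔ (K ∙ w') = L0 := by
      refine Submodule.eq_of_le_of_finrank_le
        (sup_le le_sup_left ((Submodule.span_singleton_le_iff_mem _ _).2 hw'L0)) ?_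
      rw [hL0dim, finrank_sup_span hw'H, hHr]
      omega
    have hdecomp : H.perp Hp = Y'' ⊔ (K ∙ w') := by
      symm
      refine Submodule.eq_of_le_of_finrank_le
        (sup_le hY''perpH ((Submodule.span_singleton_le_iff_mem _ _).2 hw'perpH)) ?_
      rw [hHperp_dim, finrank_sup_span hw'Y'', hY'']
    -- the coordinates of an element of perp Hp
    have huHp : ∀ u ∈ Hp, H.h u w' = 0 ∧ H.h u w = 0 := by
      intro u hu
      constructor
      · exact H.hrefl (hw'perpH u hu)
      · exact hY''iso u (hHY hu) w hwY''
    have hcoord : ∀ x ∈ H.perp Hp,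
        x - (H.h x w') • w - (H.h x w) • w' ∈ Hp := by
      intro x hx
      rw [hdecomp] at hx
      obtain ⟨y, hy, z, hz, rfl⟩ := Submodule.mem_sup.1 hx
      obtain ⟨c, rfl⟩ := Submodule.mem_span_singleton.1 hz
      rw [← hY''eq] at hy
      obtain ⟨u, hu, z2, hz2, rfl⟩ := Submodule.mem_sup.1 hy
      obtain ⟨d, rfl⟩ := Submodule.mem_span_singleton.1 hz2
      obtain ⟨hu1, hu2⟩ := huHp u hu
      have e1 : H.h (u + d • w + c • w') w' = d := by
        rw [H.hadd, H.hadd, H.hsmul, H.hsmul, hu1, hww', hw'w']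
        ring
      have e2 : H.h (u + d • w + c • w') w = c := by
        rw [H.hadd, H.hadd, H.hsmul, H.hsmul, hu2, hww, hw'w]
        ring
      rw [e1, e2]
      have : u + d • w + c • w' - d • w - c • w' = u := by module
      rw [this]
      exact hu
    have hval : ∀ x ∈ H.perp Hp,
        H.h x x = H.h x w' * (H.h x w) ^ q + H.h x w * (H.h x w') ^ q := by
      intro x hx
      have hu := hcoord x hx
      have hx' : x = (x - (H.h x w') • w - (H.h x w) • w') + (H.h x w') • w
          + (H.h x w) • w' := by module
      calc H.h x x
          = H.h ((x - (H.h x w') • w - (H.h x w) • w') + (H.h x w') • w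
            + (H.h x w) • w') x := by rw [← hx']
      _ = H.h (x - (H.h x w') • w - (H.h x w) • w') x + H.h x w' * H.h w x
            + H.h x w * H.h w' x := by rw [H.hadd, H.hadd, H.hsmul, H.hsmul]
      _ = H.h x w' * (H.h x w) ^ q + H.h x w * (H.h x w') ^ q := by
            rw [H.hrefl (hx _ hu), ← H.hherm, ← H.hherm]
            ring
    -- membership characterizations
    have hmemY'' : ∀ x ∈ H.perp Hp, (x ∈ Y'' ↔ H.h x w = 0) := by
      intro x hx
      constructor
      · intro hxY''
        exact hY''iso x hxY'' w hwY''
      · intro hb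
        have hu := hcoord x hx
        have ha' : (H.h x w) • w' = 0 := by rw [hb, zero_smul]
        have : x - (H.h x w') • w ∈ Hp := by
          have hxx : x - (H.h x w') • w - (H.h x w) • w' = x - (H.h x w') • w := by
            rw [hb, zero_smul, sub_zero]
          rwa [hxx] at hu
        have hx2 : x = (x - (H.h x w') • w) + (H.h x w') • w := by module
        rw [hx2]
        exact Y''.add_mem (hHY this) (Y''.smul_mem _ hwY'')
    have hmemL0 : ∀ x ∈ H.perp Hp, (x ∈ L0 ↔ H.h x w' = 0) := by
      intro x hx
      constructor
      · intro hxL0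
        exact hL0iso' x hxL0 w' hw'L0
      · intro ha
        have hu := hcoord x hx
        have : x - (H.h x w) • w' ∈ Hp := by
          have hxx : x - (H.h x w') • w - (H.h x w) • w' = x - (H.h x w) • w' := by
            rw [ha, zero_smul, sub_zero]
          rwa [hxx] at hu
        have hx2 : x = (x - (H.h x w) • w') + (H.h x w) • w' := by module
        rw [hx2]
        exact L0.add_mem (Submodule.mem_sup_left this) (L0.smul_mem _ hw'L0)
    -- the set of good vectors
    set DS : Type := {x : V // x ∈ H.perp Hp ∧ H.h x x = 0 ∧ x ∉ Y'' ∧ x ∉ L0} with hDS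
    -- first fibration : DS → pairs
    have hDScard : Nat.card DS = (q ^ 2) ^ (r - 1) * ((q ^ 2 - 1) * (q - 1)) := by
      set Pp : Type :=
        {p : K × K // p.1 * p.2 ^ q + p.2 * p.1 ^ q = 0 ∧ p.1 ≠ 0 ∧ p.2 ≠ 0} with hPp
      have hmk : ∀ x : DS, (H.h x.1 w' * (H.h x.1 w) ^ q + H.h x.1 w * (H.h x.1 w') ^ q = 0
          ∧ H.h x.1 w' ≠ 0 ∧ H.h x.1 w ≠ 0) := by
        rintro ⟨x, hx, hxx, hxY'', hxL0⟩
        refine ⟨by rw [← hval x hx]; exact hxx, ?_, ?_⟩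
        · intro ha
          exact hxL0 ((hmemL0 x hx).2 ha)
        · intro hb
          exact hxY'' ((hmemY'' x hx).2 hb)
      set f1 : DS → Pp := fun x => ⟨(H.h x.1 w', H.h x.1 w), hmk x⟩ with hf1
      have hfib1 : ∀ p : Pp, Nat.card {x : DS // f1 x = p} = (q ^ 2) ^ (r - 1) := by
        rintro ⟨⟨a, b⟩, hab, ha, hb⟩
        have hmkinv : ∀ u : ↥Hp, (u : V) + a • w + b • w' ∈ H.perp Hp ∧
            H.h ((u : V) + a • w + b • w') ((u : V) + a • w + b • w') = 0 ∧
            ((u : V) + a • w + b • w') ∉ Y'' ∧ ((u : V) + a • w + b • w') ∉ L0 ∧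
            H.h ((u : V) + a • w + b • w') w' = a ∧
            H.h ((u : V) + a • w + b • w') w = b := by
          rintro ⟨u, hu⟩
          obtain ⟨hu1, hu2⟩ := huHp u hu
          have hmem : u + a • w + b • w' ∈ H.perp Hp :=
            (H.perp Hp).add_mem ((H.perp Hp).add_mem (hHle' hu) ((H.perp Hp).smul_mem _ hwperpH))
              ((H.perp Hp).smul_mem _ hw'perpH)
          have ea : H.h (u + a • w + b • w') w' = a := by
            rw [H.hadd, H.hadd, H.hsmul, H.hsmul, hu1, hww', hw'w']; ring
          have eb : H.h (u + a • w + b • w') w = b := by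
            rw [H.hadd, H.hadd, H.hsmul, H.hsmul, hu2, hww, hw'w]; ring
          refine ⟨hmem, ?_, ?_, ?_, ea, eb⟩
          · rw [hval _ hmem, ea, eb, hab]
          · intro hc
            exact hb (by rw [← eb]; exact (hmemY'' _ hmem).1 hc)
          · intro hc
            exact ha (by rw [← ea]; exact (hmemL0 _ hmem).1 hc)
        have e : {x : DS // f1 x = ⟨(a, b), hab, ha, hb⟩} ≃ ↥Hp := by
          refine ⟨fun x => ⟨x.1.1 - a • w - b • w', ?_⟩,
            fun u => ⟨⟨(u : V) + a • w + b • w', (hmkinv u).1, (hmkinv u).2.1,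
              (hmkinv u).2.2.1, (hmkinv u).2.2.2.1⟩, ?_⟩, ?_, ?_⟩
          · have hx := x.2
            have hxa : H.h x.1.1 w' = a := congrArg (fun p => p.1.1) hx
            have hxb : H.h x.1.1 w = b := congrArg (fun p => p.1.2) hx
            have := hcoord x.1.1 x.1.2.1
            rwa [hxa, hxb] at this
          · apply Subtype.ext
            apply Prod.ext
            · exact (hmkinv u).2.2.2.2.1
            · exact (hmkinv u).2.2.2.2.2
          · intro x
            apply Subtype.ext
            apply Subtype.ext
            show x.1.1 - a • w - b • w' + a • w + b • w' = x.1.1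
            module
          · intro u
            apply Subtype.ext
            show (u : V) + a • w + b • w' - a • w - b • w' = (u : V)
            module
        rw [Nat.card_congr e, card_submodule Hp, hQcard, hHr]
      have hcard1 := card_mul_of_fibers f1 ((q ^ 2) ^ (r - 1)) hfib1
      rw [hcard1, hPp]
      rw [H.card_pairs]
    -- second fibration : DS → {Y' // Y' ∈ Sset ∧ Y' ⊓ Y'' = Hp}
    set SH : Type := {Y' : Submodule K V // Y' ∈ Sset ∧ Y' ⊓ Y'' = Hp} with hSH
    have hg : ∀ x : DS, (Hp ⊔ (K ∙ x.1)) ∈ Sset ∧ (Hp ⊔ (K ∙ x.1)) ⊓ Y'' = Hp := by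
      rintro ⟨x, hx, hxx, hxY'', hxL0⟩
      have hxH : x ∉ Hp := fun hc => hxY'' (hHY hc)
      set Y'x : Submodule K V := Hp ⊔ (K ∙ x) with hY'x
      have hY'xr : finrank K ↥Y'x = r := by
        rw [hY'x, finrank_sup_span hxH, hHr]; omega
      have hspaniso : (K ∙ x) ≤ H.perp (K ∙ x) := by
        intro y hy
        obtain ⟨a, rfl⟩ := Submodule.mem_span_singleton.1 hy
        intro z hz
        obtain ⟨b, rfl⟩ := Submodule.mem_span_singleton.1 hz
        rw [H.hsmul, H.hsmulr, hxx]
        ring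
      have hHpspan : Hp ≤ H.perp (K ∙ x) := by
        intro u hu y hy
        obtain ⟨a, rfl⟩ := Submodule.mem_span_singleton.1 hy
        rw [H.hsmulr, H.hrefl (hx u hu), mul_zero]
      have hY'xiso : Y'x ≤ H.perp Y'x := H.sup_isotropic hHle' hspaniso hHpspan
      have hY'xiso' : ∀ a ∈ Y'x, ∀ b ∈ Y'x, H.h a b = 0 := fun a ha b hb => hY'xiso ha b hb
      have hxY'x : x ∈ Y'x := Submodule.mem_sup_right (Submodule.mem_span_singleton_self x)
      have hY'xne : Y'x ≠ Y'' := fun hc => hxY'' (hc ▸ hxY'x)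
      have hY'xY'' : Y'x ⊓ Y'' = Hp :=
        hlag_inf Y'x Y'' Hp hY'xr hY'' le_sup_left hHY hHr hY'xne
      have hY'xperpH : Y'x ≤ H.perp Hp :=
        sup_le hHle' ((Submodule.span_singleton_le_iff_mem _ _).2 hx)
      have hYY'x : finrank K ↥(Y ⊓ Y'x) = r - i := by
        have hWle : W ≤ Y ⊓ Y'x := le_inf hWY (hWH.trans le_sup_left)
        have hMle : Y ⊓ Y'x ≤ M := le_inf inf_le_left (inf_le_right.trans hY'xperpH)
        have hlow : r - i ≤ finrank K ↥(Y ⊓ Y'x) := by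
          rw [← hint]; exact Submodule.finrank_mono hWle
        have hhigh : finrank K ↥(Y ⊓ Y'x) ≤ r - i + 1 := by
          rw [← hMdim]; exact Submodule.finrank_mono hMle
        by_contra hcc
        have hup : finrank K ↥(Y ⊓ Y'x) = r - i + 1 := by omega
        have hYM : Y ⊓ Y'x = M :=
          Submodule.eq_of_le_of_finrank_le hMle (by rw [hMdim, hup])
        have hL0le : L0 ≤ Y'x := sup_le le_sup_left (by rw [← hYM]; exact inf_le_right)
        have hL0eq' : L0 = Y'x :=
          Submodule.eq_of_le_of_finrank_le hL0le (by rw [hY'xr, hL0dim])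
        exact hxL0 (hL0eq' ▸ hxY'x)
      refine ⟨⟨hY'xr, hY'xiso', hYY'x, by rw [hY'xY'', hHr]⟩, hY'xY''⟩
    set g : DS → SH := fun x => ⟨Hp ⊔ (K ∙ x.1), hg x⟩ with hgdef
    have hfib2 : ∀ Y'e : SH, Nat.card {x : DS // g x = Y'e}
        = (q ^ 2) ^ r - (q ^ 2) ^ (r - 1) := by
      rintro ⟨Y', ⟨hr', hiso', hYi', hYY'⟩, hY'Y''⟩
      have hHpY' : Hp ≤ Y' := by rw [← hY'Y'']; exact inf_le_left
      have hY'lag : H.perp Y' = Y' := H.lag_perp hiso' (by rw [hr', hdim])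
      have hY'ne : Y' ≠ Y'' := by
        intro hc
        have h11 : Y' ⊓ Y'' = Y'' := by rw [hc, inf_idem]
        have h12 := congrArg (fun A : Submodule K V => finrank K ↥A) h11
        rw [hYY', hY''] at h12
        omega
      have hY'L0ne : Y' ≠ L0 := by
        intro hc
        have h11 : Y ⊓ Y' = Y ⊓ L0 := by rw [hc]
        have h12 := congrArg (fun A : Submodule K V => finrank K ↥A) h11
        rw [hYi', hYL0] at h12
        omega
      have hY'L0inf : Y' ⊓ L0 = Hp :=
        hlag_inf Y' L0 Hp hr' hL0dim hHpY' le_sup_left hHr hY'L0ne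
      have hY'perpH : Y' ≤ H.perp Hp := by rw [← hY'lag]; exact H.perp_anti hHpY'
      have e : {x : DS // g x = ⟨Y', ⟨hr', hiso', hYi', hYY'⟩, hY'Y''⟩} ≃
          {x : V // x ∈ Y' ∧ x ∉ Hp} := by
        refine ⟨fun x => ⟨x.1.1, ?_, fun hc => x.1.2.2.2.1 (hHY hc)⟩,
          fun y => ⟨⟨y.1, hY'perpH y.2.1, hiso' y.1 y.2.1 y.1 y.2.1, ?_, ?_⟩, ?_⟩, ?_, ?_⟩
        · have hxe : Hp ⊔ (K ∙ x.1.1) = Y' := congrArg Subtype.val x.2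
          have h5 : x.1.1 ∈ Hp ⊔ (K ∙ x.1.1) :=
            Submodule.mem_sup_right (Submodule.mem_span_singleton_self _)
          rwa [hxe] at h5
        · intro hc
          have h13 : (y : V) ∈ Y' ⊓ Y'' := Submodule.mem_inf.2 ⟨y.2.1, hc⟩
          rw [hY'Y''] at h13
          exact y.2.2 h13
        · intro hc
          have h13 : (y : V) ∈ Y' ⊓ L0 := Submodule.mem_inf.2 ⟨y.2.1, hc⟩
          rw [hY'L0inf] at h13
          exact y.2.2 h13
        · apply Subtype.ext
          show Hp ⊔ (K ∙ y.1) = Y'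
          refine Submodule.eq_of_le_of_finrank_le
            (sup_le hHpY' ((Submodule.span_singleton_le_iff_mem _ _).2 y.2.1)) ?_
          rw [hr', finrank_sup_span y.2.2, hHr]
          omega
        · intro x; apply Subtype.ext; apply Subtype.ext; rfl
        · intro y; apply Subtype.ext; rfl
      rw [Nat.card_congr e]
      have h6 := card_compl_add (K := K) hHpY'
      rw [hQcard, hHr, hr'] at h6
      omega
    have hcard2 := card_mul_of_fibers g ((q ^ 2) ^ r - (q ^ 2) ^ (r - 1)) hfib2
    rw [hDScard] at hcard2
    have hq2pos : 1 ≤ q ^ 2 := Nat.one_le_pow _ _ (by omega)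
    have hpow : (q ^ 2) ^ r - (q ^ 2) ^ (r - 1) = (q ^ 2) ^ (r - 1) * (q ^ 2 - 1) := by
      have h7 : (q ^ 2) ^ r = (q ^ 2) ^ (r - 1) * q ^ 2 := by
        rw [← pow_succ]
        congr 1
        omega
      rw [h7, mul_tsub, mul_one]
    rw [hpow, mul_assoc] at hcard2
    have hq2_4 : 4 ≤ q ^ 2 := by
      calc 4 = 2 ^ 2 := by norm_num
      _ ≤ q ^ 2 := Nat.pow_le_pow_left h2q 2
    have hposk : 0 < (q ^ 2) ^ (r - 1) * (q ^ 2 - 1) :=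
      Nat.mul_pos (pow_pos (by omega) _) (by omega)
    have hfinal : (q ^ 2 - 1) * (q - 1) = (q ^ 2 - 1) * Nat.card SH :=
      Nat.eq_of_mul_eq_mul_left
        (show 0 < (q ^ 2) ^ (r - 1) from pow_pos (by omega) _) hcard2
    have := Nat.eq_of_mul_eq_mul_left (show 0 < q ^ 2 - 1 by omega) hfinal
    rw [hSH] at this
    exact this.symm
  -- count the hyperplanes between W and Y''
  set HypT : Type := {C : Submodule K V // W ≤ C ∧ C ≤ Y'' ∧ finrank K ↥C = r - 1} with hHypT
  have hWperpY'' : W ≤ H.perp Y'' := by rw [hY''lag]; exact hWY''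
  have hY''perpW : Y'' ≤ H.perp W := H.le_perp_comm hWperpY''
  have hperpWdim : finrank K ↥(H.perp W) = r + i := by
    have h30 := hperpdim W
    rw [hint] at h30
    omega
  have hq2_4 : 4 ≤ q ^ 2 := by
    calc 4 = 2 ^ 2 := by norm_num
    _ ≤ q ^ 2 := Nat.pow_le_pow_left h2q 2
  set LinT : Type := {C : Submodule K V // Y'' ≤ C ∧ C ≤ H.perp W ∧
    finrank K ↥C = r + 1} with hLinT
  have eHL : HypT ≃ LinT := by
    refine ⟨fun C => ⟨H.perp C.1, ?_, ?_, ?_⟩, fun L => ⟨H.perp L.1, ?_, ?_, ?_⟩, ?_, ?_⟩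
    · have h40 := H.perp_anti C.2.2.1
      rwa [hY''lag] at h40
    · exact H.perp_anti C.2.1
    · have h31 := hperpdim C.1
      rw [C.2.2.2] at h31
      omega
    · exact H.le_perp_comm L.2.2.1
    · have h32 := H.perp_anti L.2.1
      rwa [hY''lag] at h32
    · obtain ⟨L, hL1, hL2, hL3⟩ := L
      have h31 := hperpdim L
      rw [hL3] at h31
      show finrank K ↥(H.perp L) = r - 1
      omega
    · intro C; exact Subtype.ext (H.perp_perp C.1)
    · intro L; exact Subtype.ext (H.perp_perp L.1)
  have hcardHyp := card_cover (K := K) (A := Y'') (B := H.perp W) hY''perpW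
  rw [hQcard, hY'', hperpWdim] at hcardHyp
  have hcards : Nat.card HypT = Nat.card LinT := Nat.card_congr eHL
  -- top fibration
  have hF : ∀ Y's : ↥Sset, W ≤ (Y's.1 ⊓ Y'') ∧ (Y's.1 ⊓ Y'') ≤ Y'' ∧
      finrank K ↥(Y's.1 ⊓ Y'') = r - 1 := by
    rintro ⟨Y', hY's⟩
    have hWle : W ≤ Y' := by
      have h33 := hstep1 Y' hY's
      rw [← h33]
      exact inf_le_right
    exact ⟨le_inf hWle hWY'', inf_le_right, hY's.2.2.2⟩
  set F : ↥Sset → HypT := fun Y's => ⟨Y's.1 ⊓ Y'', hF Y's⟩ with hFdef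
  have hfibF : ∀ C : HypT, Nat.card {Y's : ↥Sset // F Y's = C} = q - 1 := by
    rintro ⟨C, hWC, hCY'', hCr⟩
    rw [← hperH C hWC hCY'' hCr]
    apply Nat.card_congr
    refine ⟨fun x => ⟨x.1.1, x.1.2, congrArg Subtype.val x.2⟩,
      fun y => ⟨⟨y.1, y.2.1⟩, Subtype.ext y.2.2⟩, ?_, ?_⟩
    · intro x; apply Subtype.ext; apply Subtype.ext; rfl
    · intro y; apply Subtype.ext; rfl
  have hcardS := card_mul_of_fibers F (q - 1) hfibF
  rw [hcards] at hcardS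
  -- rational endgame
  have hle1 : (q ^ 2) ^ r ≤ (q ^ 2) ^ (r + 1) := Nat.pow_le_pow_right (by omega) (by omega)
  have hle2 : (q ^ 2) ^ r ≤ (q ^ 2) ^ (r + i) := Nat.pow_le_pow_right (by omega) (by omega)
  have hNQ : (Nat.card LinT : ℚ) * (((q:ℚ)^2)^(r+1) - ((q:ℚ)^2)^r)
      = ((q:ℚ)^2)^(r+i) - ((q:ℚ)^2)^r := by
    have hc := congrArg (Nat.cast (R := ℚ)) hcardHyp
    rw [Nat.cast_mul, Nat.cast_sub hle1, Nat.cast_sub hle2] at hc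
    push_cast at hc
    exact hc
  have hq2Q : (2:ℚ) ≤ (q:ℚ) := by exact_mod_cast h2q
  have hX1 : (1:ℚ) < (q:ℚ)^2 := by nlinarith
  have hXrne : ((q:ℚ)^2)^r ≠ 0 := pow_ne_zero _ (by nlinarith)
  have hNval : (Nat.card LinT : ℚ) = (((q:ℚ)^2)^i - 1)/(((q:ℚ)^2) - 1) := by
    rw [eq_div_iff (sub_ne_zero.2 (ne_of_gt hX1))]
    apply mul_right_cancel₀ hXrne
    calc (Nat.card LinT : ℚ) * (((q:ℚ)^2) - 1) * ((q:ℚ)^2)^r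
        = (Nat.card LinT : ℚ) * (((q:ℚ)^2)^(r+1) - ((q:ℚ)^2)^r) := by ring
      _ = ((q:ℚ)^2)^(r+i) - ((q:ℚ)^2)^r := hNQ
      _ = (((q:ℚ)^2)^i - 1) * ((q:ℚ)^2)^r := by ring
  rw [hcardS, Nat.cast_mul, Nat.cast_sub (show 1 ≤ q by omega), Nat.cast_one, hNval]
  rw [show (q:ℚ)^(2*i) = ((q:ℚ)^2)^i from by rw [← pow_mul]]
  have hden : (q:ℚ)^2 - 1 ≠ 0 := sub_ne_zero.2 (ne_of_gt hX1)
  field_simp
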